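/- Let S ⊆ ℝⁿ be a convex hull of finitely many points a₁,…,a_m together with scaling by factors ≤ 1 from the origin, i.e., S = {Σₖ μₖ aₖ : μₖ ≥ 0, Σₖ μₖ ≤ 1}, and suppose 0 ∈ interior S. Then S equals the convex hull of {0, a₁, …, a_m}, and the minimum L¹-distance from 0 to ∂S (attained) equals minⱼ min{λⱼ⁻, λⱼ⁺}, where λⱼ⁺ = max{λ : λeⱼ ∈ S} and λⱼ⁻ = max{λ : -λeⱼ ∈ S}. -/

import Mathlib

lemma aux_sum_single {n : ℕ} (x : Fin n → ℝ) :
    ∑ j, x j • (Pi.single j 1 : Fin n → ℝ) = x := by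
  funext i
  simp [Finset.sum_apply, Pi.single_apply, mul_ite, Finset.sum_ite_eq']

lemma aux_l1_single {n : ℕ} (j : Fin n) (r : ℝ) :
    ∑ i, |(r • (Pi.single j 1 : Fin n → ℝ)) i| = |r| := by
  simp [Pi.single_apply, mul_ite, apply_ite abs, Finset.sum_ite_eq']

lemma aux_interior {n : ℕ} {S : Set (Fin n → ℝ)} (hconv : Convex ℝ S)
    (h0 : (0 : Fin n → ℝ) ∈ interior S) {ι : Type*} [Fintype ι]
    (w : ι → ℝ) (v : ι → Fin n → ℝ) (hw : ∀ i, 0 ≤ w i) (hv : ∀ i, v i ∈ S)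
    (ht : ∑ i, w i < 1) : ∑ i, w i • v i ∈ interior S := by
  set t := ∑ i, w i with htdef
  have ht0 : 0 ≤ t := Finset.sum_nonneg fun i _ => hw i
  rcases eq_or_lt_of_le ht0 with h | h
  · have : ∀ i ∈ Finset.univ, w i = 0 :=
      (Finset.sum_eq_zero_iff_of_nonneg (fun i _ => hw i)).mp h.symm
    have : ∑ i, w i • v i = 0 := by
      apply Finset.sum_eq_zero
      intro i hi
      rw [this i hi, zero_smul]
    rw [this]; exact h0
  · have hy : ∑ i, (w i / t) • v i ∈ S := by
      apply hconv.sum_mem (fun i _ => div_nonneg (hw i) ht0)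
      · rw [← Finset.sum_div, ← htdef, div_self h.ne']
      · exact fun i _ => hv i
    have key : ∑ i, w i • v i = (1 - t) • (0 : Fin n → ℝ) + t • ∑ i, (w i / t) • v i := by
      rw [smul_zero, zero_add, Finset.smul_sum]
      refine Finset.sum_congr rfl fun i _ => ?_
      rw [smul_smul, mul_div_cancel₀ _ h.ne']
    rw [key]
    exact hconv.combo_interior_self_mem_interior h0 hy (by linarith) ht0 (by ring)

lemma aux_sSup {n : ℕ} {S : Set (Fin n → ℝ)} (hcl : IsClosed S)
    (hbdd : Bornology.IsBounded S) (h0 : (0 : Fin n → ℝ) ∈ interior S)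
    (u : Fin n → ℝ) (hu : ‖u‖ = 1) :
    0 < sSup {l : ℝ | l • u ∈ S} ∧ sSup {l : ℝ | l • u ∈ S} • u ∈ S ∧
      sSup {l : ℝ | l • u ∈ S} • u ∉ interior S := by
  set T := {l : ℝ | l • u ∈ S} with hT
  obtain ⟨R, hR⟩ := hbdd.subset_closedBall 0
  have hTbdd : BddAbove T := by
    refine ⟨R, fun l hl => ?_⟩
    have := hR hl
    rw [Metric.mem_closedBall, dist_zero_right, norm_smul, hu, mul_one] at this
    exact (le_abs_self l).trans this
  obtain ⟨ε, hε, hball⟩ := Metric.mem_nhds_iff.mp (mem_interior_iff_mem_nhds.mp h0)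
  have hmem : (ε / 2) ∈ T := by
    apply hball
    rw [Metric.mem_ball, dist_zero_right, norm_smul, hu, mul_one]
    rw [Real.norm_eq_abs, abs_of_pos (by linarith)]
    linarith
  have hTne : T.Nonempty := ⟨_, hmem⟩
  have hTcl : IsClosed T := hcl.preimage (by continuity)
  have hsup_mem : sSup T ∈ T := hTcl.csSup_mem hTne hTbdd
  refine ⟨lt_of_lt_of_le (by linarith) (le_csSup hTbdd hmem), hsup_mem, ?_⟩
  intro hint
  obtain ⟨δ, hδ, hball'⟩ := Metric.isOpen_iff.mp isOpen_interior _ hint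
  have : (sSup T + δ / 2) ∈ T := by
    show (sSup T + δ / 2) • u ∈ S
    apply interior_subset
    apply hball'
    rw [Metric.mem_ball, dist_eq_norm, ← sub_smul, add_sub_cancel_left, norm_smul, hu,
      mul_one, Real.norm_eq_abs, abs_of_pos (by linarith)]
    linarith
  have := le_csSup hTbdd this
  linarith

lemma aux_hull {n m : ℕ} (a : Fin m → (Fin n → ℝ)) :
    {x : Fin n → ℝ | ∃ μ : Fin m → ℝ,
        (∀ k, 0 ≤ μ k) ∧ (∑ k, μ k) ≤ 1 ∧ x = ∑ k, μ k • a k} =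
      convexHull ℝ ({0} ∪ Set.range a) := by
  apply Set.Subset.antisymm
  · rintro x ⟨μ, hμ0, hμ1, rfl⟩
    have key : ∑ i : Fin (m+1), (Fin.cons (1 - ∑ k, μ k) μ : Fin (m+1) → ℝ) i •
        (Fin.cons 0 a : Fin (m+1) → Fin n → ℝ) i = ∑ k, μ k • a k := by
      rw [Fin.sum_univ_succ]
      simp
    rw [← key]
    apply (convex_convexHull ℝ _).sum_mem
    · intro i _
      refine Fin.cases ?_ ?_ i
      · simpa using by linarith
      · intro k; simpa using hμ0 k
    · rw [Fin.sum_cons]; ring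
    · intro i _
      apply subset_convexHull
      refine Fin.cases ?_ ?_ i
      · simp
      · intro k; simp [Set.mem_union]
  · apply convexHull_min
    · rintro x (hx | ⟨k, rfl⟩)
      · exact ⟨0, fun k => le_rfl, by simp, by simp [Set.eq_of_mem_singleton hx]⟩
      · refine ⟨fun i => if i = k then 1 else 0, fun i => by positivity, ?_, ?_⟩
        · simp
        · simp [ite_smul]
    · rintro x ⟨μ, hμ0, hμ1, rfl⟩ y ⟨ν, hν0, hν1, rfl⟩ s t hs ht hst
      refine ⟨fun k => s * μ k + t * ν k,
        fun k => add_nonneg (mul_nonneg hs (hμ0 k)) (mul_nonneg ht (hν0 k)), ?_, ?_⟩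
      · rw [Finset.sum_add_distrib, ← Finset.mul_sum, ← Finset.mul_sum]
        calc s * ∑ k, μ k + t * ∑ k, ν k ≤ s * 1 + t * 1 := by
              gcongr
          _ = 1 := by linarith
      · rw [Finset.smul_sum, Finset.smul_sum, ← Finset.sum_add_distrib]
        refine Finset.sum_congr rfl fun k _ => ?_
        rw [add_smul, smul_smul, smul_smul]

/-- For the polyhedron S = {Σ μₖaₖ : μ ≥ 0, Σμₖ ≤ 1} with 0 interior:
S is the convex hull of {0, a₁, …, a_m}, and the minimum L¹-distance from 0
to ∂S equals minⱼ min{λⱼ⁻, λⱼ⁺} with λⱼ± = max{λ : ±λeⱼ ∈ S}. -/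
theorem min_L1_dist_convex_hull {n m : ℕ} [NeZero n]
    (a : Fin m → (Fin n → ℝ)) (S : Set (Fin n → ℝ))
    (hSdef : S = {x | ∃ μ : Fin m → ℝ,
        (∀ k, 0 ≤ μ k) ∧ (∑ k, μ k) ≤ 1 ∧ x = ∑ k, μ k • a k})
    (h0 : (0 : Fin n → ℝ) ∈ interior S) :
    S = convexHull ℝ ({0} ∪ Set.range a) ∧
    IsLeast {r : ℝ | ∃ x ∈ frontier S, r = ∑ i, |x i|}
      (⨅ j : Fin n,
        min (sSup {l : ℝ | (-l) • (Pi.single j 1 : Fin n → ℝ) ∈ S})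
            (sSup {l : ℝ | l • (Pi.single j 1 : Fin n → ℝ) ∈ S})) := by
  have hhull : S = convexHull ℝ ({0} ∪ Set.range a) := by
    rw [hSdef]; exact aux_hull a
  have hfin : ({0} ∪ Set.range a : Set (Fin n → ℝ)).Finite :=
    (Set.finite_singleton 0).union (Set.finite_range a)
  have hcpt : IsCompact S := hhull ▸ hfin.isCompact_convexHull (𝕜 := ℝ)
  have hcl : IsClosed S := hcpt.isClosed
  have hbdd : Bornology.IsBounded S := hcpt.isBounded
  have hconv : Convex ℝ S := hhull ▸ convex_convexHull ℝ _
  have hnorm : ∀ j : Fin n, ‖(Pi.single j 1 : Fin n → ℝ)‖ = 1 := by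
    intro j; simp [Pi.norm_single]
  set P : Fin n → Set ℝ := fun j => {l : ℝ | l • (Pi.single j 1 : Fin n → ℝ) ∈ S} with hPdef
  set N : Fin n → Set ℝ := fun j => {l : ℝ | (-l) • (Pi.single j 1 : Fin n → ℝ) ∈ S} with hNdef
  have hNeq : ∀ j, N j = {l : ℝ | l • (-(Pi.single j 1 : Fin n → ℝ)) ∈ S} := by
    intro j; ext l; simp [hNdef, neg_smul, smul_neg]
  have hp := fun j : Fin n => aux_sSup hcl hbdd h0 _ (hnorm j)
  have hm : ∀ j : Fin n, 0 < sSup (N j) ∧ sSup (N j) • (-(Pi.single j 1 : Fin n → ℝ)) ∈ S ∧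
      sSup (N j) • (-(Pi.single j 1 : Fin n → ℝ)) ∉ interior S := by
    intro j
    rw [hNeq j]
    exact aux_sSup hcl hbdd h0 (-(Pi.single j 1)) (by rw [norm_neg]; exact hnorm j)
  set f : Fin n → ℝ := fun j => min (sSup (N j)) (sSup (P j)) with hfdef
  have hfpos : ∀ j, 0 < f j := fun j => lt_min (hm j).1 (hp j).1
  have hpos : 0 < n := Nat.pos_of_ne_zero (NeZero.ne n)
  haveI : Nonempty (Fin n) := ⟨⟨0, hpos⟩⟩
  have hbddf : BddBelow (Set.range f) := (Set.finite_range f).bddBelow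
  set c : ℝ := ⨅ j, f j with hcdef
  have hcle : ∀ j, c ≤ f j := fun j => ciInf_le hbddf j
  obtain ⟨j₀, hj₀⟩ := Finite.exists_min f
  have hc : c = f j₀ := le_antisymm (ciInf_le hbddf j₀) (le_ciInf hj₀)
  have hcpos : 0 < c := hc ▸ hfpos j₀
  have hfront : frontier S = S \ interior S := hcl.frontier_eq
  constructor
  · exact hhull
  constructor
  · -- membership: find a frontier point with L¹ norm c
    rcases le_total (sSup (N j₀)) (sSup (P j₀)) with h | h
    · refine ⟨sSup (N j₀) • (-(Pi.single j₀ 1 : Fin n → ℝ)), ?_, ?_⟩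
      · rw [hfront]; exact ⟨(hm j₀).2.1, (hm j₀).2.2⟩
      · have : sSup (N j₀) • (-(Pi.single j₀ 1 : Fin n → ℝ)) =
            (-(sSup (N j₀))) • (Pi.single j₀ 1 : Fin n → ℝ) := by
          rw [neg_smul, smul_neg]
        rw [this, aux_l1_single, abs_neg, abs_of_pos (hm j₀).1, hc]
        show min (sSup (N j₀)) (sSup (P j₀)) = sSup (N j₀)
        exact min_eq_left h
    · refine ⟨sSup (P j₀) • (Pi.single j₀ 1 : Fin n → ℝ), ?_, ?_⟩
      · rw [hfront]; exact ⟨(hp j₀).2.1, (hp j₀).2.2⟩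
      · rw [aux_l1_single, abs_of_pos (hp j₀).1, hc]
        show min (sSup (N j₀)) (sSup (P j₀)) = sSup (P j₀)
        exact min_eq_right h
  · -- lower bound
    rintro r ⟨x, hxf, rfl⟩
    by_contra hlt
    push_neg at hlt
    set lam : Fin n → ℝ := fun j => if 0 ≤ x j then sSup (P j) else sSup (N j) with hlamdef
    set v : Fin n → (Fin n → ℝ) := fun j => if 0 ≤ x j then
        sSup (P j) • (Pi.single j 1 : Fin n → ℝ)
      else sSup (N j) • (-(Pi.single j 1 : Fin n → ℝ)) with hvdef
    set w : Fin n → ℝ := fun j => |x j| / lam j with hwdef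
    have hlampos : ∀ j, 0 < lam j := by
      intro j; rw [hlamdef]
      dsimp only
      split
      · exact (hp j).1
      · exact (hm j).1
    have hlamc : ∀ j, c ≤ lam j := by
      intro j; rw [hlamdef]
      dsimp only
      split
      · exact (hcle j).trans (min_le_right _ _)
      · exact (hcle j).trans (min_le_left _ _)
    have hvS : ∀ j, v j ∈ S := by
      intro j; rw [hvdef]
      dsimp only
      split
      · exact (hp j).2.1
      · exact (hm j).2.1
    have hw0 : ∀ j, 0 ≤ w j := fun j => div_nonneg (abs_nonneg _) (hlampos j).le
    have hxsum : x = ∑ j, w j • v j := by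
      conv_lhs => rw [← aux_sum_single x]
      refine Finset.sum_congr rfl fun j _ => ?_
      rcases le_or_gt 0 (x j) with hxj | hxj
      · simp only [hwdef, hvdef, hlamdef, if_pos hxj]
        rw [smul_smul, div_mul_cancel₀ _ (hp j).1.ne', abs_of_nonneg hxj]
      · simp only [hwdef, hvdef, hlamdef, if_neg (not_le.mpr hxj)]
        rw [smul_smul, div_mul_cancel₀ _ (hm j).1.ne', abs_of_neg hxj, neg_smul,
          smul_neg, neg_neg]
    have hsw : ∑ j, w j < 1 := by
      have h1 : ∀ j ∈ Finset.univ, w j ≤ |x j| / c := by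
        intro j _
        rw [hwdef]
        exact div_le_div_of_nonneg_left (abs_nonneg _) hcpos (hlamc j)
      calc ∑ j, w j ≤ ∑ j, |x j| / c := Finset.sum_le_sum h1
        _ = (∑ j, |x j|) / c := by rw [Finset.sum_div]
        _ < 1 := (div_lt_one hcpos).mpr hlt
    have hxint : x ∈ interior S := by
      rw [hxsum]
      exact aux_interior hconv h0 w v hw0 hvS hsw
    exact ((hfront ▸ hxf).2) hxint
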